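/- For γ ∈ (0,1), the unique time t at which the total mass of the explicit solution of the Flory equation with multiplicative kernel and monodisperse initial data has dropped by γ, i.e. the infimum of { t ≥ 0 : 1 − m(t) ≥ γ } where m(t) = 1 for t ≤ 1 and m(t) = t*(t)/t for t > 1 with t*(t) ∈ (0,1) the unique solution of t* e^{−t*} = t e^{−t}, equals −ln(1−γ)/γ. -/

import Mathlib

open Set Real

private lemma fmono : StrictMonoOn (fun s : ℝ => s * exp (-s)) (Icc 0 1) := by
  apply strictMonoOn_of_deriv_pos (convex_Icc 0 1)
  · exact (continuous_id.mul (Real.continuous_exp.comp continuous_neg)).continuousOn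
  · intro y hy
    rw [interior_Icc] at hy
    have hd : HasDerivAt (fun s : ℝ => s * exp (-s))
        (1 * exp (-y) + y * (exp (-y) * (-1))) y :=
      (hasDerivAt_id y).mul ((hasDerivAt_id y).neg.exp)
    rw [hd.deriv]
    have h1 : 0 < exp (-y) := exp_pos _
    nlinarith [hy.1, hy.2]

theorem stmt_9 (γ : ℝ) (hγ : γ ∈ Ioo (0:ℝ) 1)
    (tstar : ℝ → ℝ)
    (htstar : ∀ t, 1 < t → tstar t ∈ Ioo (0:ℝ) 1 ∧ tstar t * exp (-tstar t) = t * exp (-t))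
    (m : ℝ → ℝ)
    (hm : ∀ t, 0 ≤ t → m t = if t ≤ 1 then 1 else tstar t / t) :
    sInf {t : ℝ | 0 ≤ t ∧ γ ≤ 1 - m t} = -Real.log (1 - γ) / γ := by
  obtain ⟨hγ0, hγ1⟩ := hγ
  set x : ℝ := 1 - γ with hxdef
  have hx0 : 0 < x := by rw [hxdef]; linarith
  have hx1 : x < 1 := by rw [hxdef]; linarith
  have hlogx : log x < 0 := log_neg hx0 hx1
  set T : ℝ := -log x / γ with hTdef
  have hT0 : 0 < T := div_pos (by linarith) hγ0
  have hT1 : 1 < T := by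
    have h := log_lt_sub_one_of_pos hx0 (by linarith : x ≠ 1)
    rw [hTdef, lt_div_iff₀ hγ0]
    rw [hxdef] at h
    linarith
  have hxT1 : x * T < 1 := by
    have h := log_lt_sub_one_of_pos (show (0:ℝ) < 1/x by positivity)
      (by
        intro hc
        have : x = 1 := by field_simp at hc; linarith
        linarith)
    rw [Real.log_div one_ne_zero (ne_of_gt hx0), Real.log_one] at h
    have h2 : x * (-log x) < 1 - x := by
      have := mul_lt_mul_of_pos_left h hx0
      have hxx : x * (1/x) = 1 := by field_simp
      nlinarith
    have hrw : x * T = (x * -log x) / γ := by rw [hTdef]; ring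
    rw [hrw, div_lt_one hγ0, hxdef]
    rw [hxdef] at h2; linarith
  have hxT0 : 0 < x * T := mul_pos hx0 hT0
  -- exp (γ * T) = 1 / x
  have hexp : exp (γ * T) = 1 / x := by
    have : γ * T = -log x := by
      rw [hTdef]; field_simp
    rw [this, Real.exp_neg, Real.exp_log hx0, one_div]
  -- key: tstar T = x * T
  obtain ⟨hTIoo, hTeq⟩ := htstar T hT1
  have hfeq : (x * T) * exp (-(x * T)) = T * exp (-T) := by
    have : -(x * T) = -T + γ * T := by rw [hxdef]; ring
    rw [this, Real.exp_add, hexp]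
    field_simp
  have htsT : tstar T = x * T := by
    apply fmono.injOn (Ioo_subset_Icc_self hTIoo)
      (Ioo_subset_Icc_self ⟨hxT0, hxT1⟩)
    simp only
    rw [hTeq, hfeq]
  have hmemT : 0 ≤ T ∧ γ ≤ 1 - m T := by
    refine ⟨le_of_lt hT0, ?_⟩
    rw [hm T (le_of_lt hT0), if_neg (not_le.mpr hT1), htsT,
      mul_div_assoc, div_self (ne_of_gt hT0), mul_one, hxdef]
    linarith
  have hlb : ∀ t ∈ {t : ℝ | 0 ≤ t ∧ γ ≤ 1 - m t}, T ≤ t := by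
    rintro t ⟨ht0, htγ⟩
    by_contra hlt
    push_neg at hlt
    rw [hm t ht0] at htγ
    by_cases ht1 : t ≤ 1
    · rw [if_pos ht1] at htγ; linarith
    · rw [if_neg ht1] at htγ
      push_neg at ht1
      obtain ⟨htIoo, hteq⟩ := htstar t ht1
      have htpos : 0 < t := by linarith
      have hle : tstar t ≤ x * t := by
        have h' : tstar t / t ≤ x := by rw [hxdef]; linarith
        calc tstar t = tstar t / t * t := by field_simp
          _ ≤ x * t := mul_le_mul_of_nonneg_right h' (le_of_lt htpos)
      have hxt1 : x * t < 1 := lt_trans (by nlinarith) hxT1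
      have hmle := fmono.monotoneOn (Ioo_subset_Icc_self htIoo)
        (Ioo_subset_Icc_self ⟨mul_pos hx0 htpos, hxt1⟩) hle
      try simp only at hmle
      rw [hteq] at hmle
      -- t * exp (-t) ≤ x * t * exp (-(x*t))
      have hkey : exp (-t) ≤ x * exp (-(x * t)) := by
        have het := exp_pos (-(x*t))
        nlinarith [hmle, htpos]
      -- exp (-γ t) ≤ x
      have h2 : exp (-(γ * t)) ≤ x := by
        have : -t = -(x*t) + -(γ * t) := by rw [hxdef]; ring
        rw [this, Real.exp_add] at hkey
        have het := exp_pos (-(x*t))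
        nlinarith [hkey]
      have h3 : -(γ * t) ≤ log x := by
        have := Real.log_le_log (exp_pos _) h2
        rwa [Real.log_exp] at this
      have : T ≤ t := by
        rw [hTdef, div_le_iff₀ hγ0]
        nlinarith [h3]
      linarith
  exact IsLeast.csInf_eq ⟨hmemT, hlb⟩
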